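/- arXiv:2306.09507 — 2 statements merged into one kernel-verified Lean document; each statement's English description precedes it below -/
import Mathlib

section
/- The winsorized mean fails subadditivity: there exist random variables X and Y (independent standard normals) and winsorizing proportions 0 < p < 1−q < 1/2 such that ρ(X+Y) > ρ(X) + ρ(Y). -/
open MeasureTheory ProbabilityTheory intervalIntegral

/-- The (left-continuous generalized inverse) quantile function of a measure on `ℝ`. -/
noncomputable def mQuantile (μ : Measure ℝ) (u : ℝ) : ℝ :=
  sInf {x : ℝ | u ≤ (μ (Set.Iic x)).toReal}

/-- Winsorized mean of a distribution `μ` on `ℝ` with proportions `p`, `q`: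
`ρ(μ) = p·F⁻¹(p) + ∫_p^{1−q} F⁻¹(u) du + q·F⁻¹(1−q)`. -/
noncomputable def winsorizedMean (μ : Measure ℝ) (p q : ℝ) : ℝ :=
  p * mQuantile μ p + (∫ u in p..(1 - q), mQuantile μ u) + q * mQuantile μ (1 - q)

section Aux

open Real Set Pointwise

namespace WinsorAux

/-! ### The convolution of two standard gaussian densities -/

lemma gpdf_prod (y x : ℝ) :
    gaussianPDFReal 0 1 x * gaussianPDFReal x 1 y
      = (2 * π)⁻¹ * rexp (- y ^ 2 / 4) * rexp (-(x - y / 2) ^ 2) := by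
  simp only [gaussianPDFReal, NNReal.coe_one, mul_one]
  rw [mul_mul_mul_comm, ← mul_inv, Real.mul_self_sqrt (by positivity), ← Real.exp_add,
    mul_assoc, ← Real.exp_add]
  congr 1
  ring

lemma gpdf_conv (y : ℝ) :
    (∫ x, gaussianPDFReal 0 1 x * gaussianPDFReal x 1 y) = gaussianPDFReal 0 2 y := by
  simp_rw [gpdf_prod y]
  rw [MeasureTheory.integral_const_mul]
  have h1 : (∫ x : ℝ, rexp (-(x - y / 2) ^ 2)) = Real.sqrt π := by
    rw [integral_sub_right_eq_self (μ := volume) (fun x => rexp (-x ^ 2)) (y / 2)]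
    simpa using integral_gaussian 1
  rw [h1]
  simp only [gaussianPDFReal, NNReal.coe_ofNat]
  rw [show -(y - 0) ^ 2 / (2 * (2:ℝ)) = -y ^ 2 / 4 by ring]
  have h2 : Real.sqrt (2 * π * 2) = 2 * Real.sqrt π := by
    rw [show (2:ℝ) * π * 2 = 2^2 * π by ring, Real.sqrt_mul (by positivity),
      Real.sqrt_sq (by norm_num)]
  rw [h2]
  have hπ : (0:ℝ) < Real.sqrt π := Real.sqrt_pos.2 pi_pos
  rw [show (2:ℝ) * π = 2 * (Real.sqrt π * Real.sqrt π) by rw [Real.mul_self_sqrt pi_pos.le]]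
  field_simp

open scoped ENNReal

lemma gpdf_measurable2 : Measurable (fun p : ℝ × ℝ => gaussianPDF p.1 1 p.2) := by
  simp only [gaussianPDF, gaussianPDFReal]
  apply Measurable.ennreal_ofReal
  fun_prop

lemma lint_conv (y : ℝ) :
    ∫⁻ x, gaussianPDF 0 1 x * gaussianPDF x 1 y = gaussianPDF 0 2 y := by
  have hnn : 0 ≤ᵐ[volume] fun x => gaussianPDFReal 0 1 x * gaussianPDFReal x 1 y :=
    Filter.Eventually.of_forall fun x =>
      mul_nonneg (gaussianPDFReal_nonneg _ _ _) (gaussianPDFReal_nonneg _ _ _)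
  have hint : Integrable (fun x => gaussianPDFReal 0 1 x * gaussianPDFReal x 1 y) := by
    simp_rw [gpdf_prod y]
    have h := (integrable_exp_neg_mul_sq (b := 1) one_pos).comp_sub_right (y / 2)
    simp only [neg_mul, one_mul] at h
    exact h.const_mul _
  simp_rw [gaussianPDF, ← ENNReal.ofReal_mul (gaussianPDFReal_nonneg 0 1 _)]
  rw [← ofReal_integral_eq_lintegral_ofReal hint hnn, gpdf_conv]

/-- The sum of two independent standard gaussians is gaussian with variance 2. -/
lemma gauss_sum_map :
    Measure.map (fun p : ℝ × ℝ => p.1 + p.2) ((gaussianReal 0 1).prod (gaussianReal 0 1))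
      = gaussianReal 0 2 := by
  ext s hs
  rw [Measure.map_apply measurable_add hs, Measure.prod_apply (measurable_add hs)]
  have key : ∀ x : ℝ,
      (gaussianReal 0 1) (Prod.mk x ⁻¹' ((fun p : ℝ × ℝ => p.1 + p.2) ⁻¹' s))
        = ∫⁻ y in s, gaussianPDF x 1 y := by
    intro x
    have h0 : Prod.mk x ⁻¹' ((fun p : ℝ × ℝ => p.1 + p.2) ⁻¹' s) = (x + ·) ⁻¹' s := rfl
    rw [h0, ← Measure.map_apply (measurable_const_add x) hs, gaussianReal_map_const_add,
      zero_add, gaussianReal_apply x one_ne_zero s]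
  simp_rw [key]
  have hmeas : Measurable fun x => ∫⁻ y in s, gaussianPDF x 1 y :=
    Measurable.lintegral_prod_right (f := fun x y => gaussianPDF x 1 y) gpdf_measurable2
  rw [gaussianReal_of_var_ne_zero 0 one_ne_zero,
    lintegral_withDensity_eq_lintegral_mul _ (measurable_gaussianPDF 0 1) hmeas]
  simp only [Pi.mul_apply]
  have hswap : ∫⁻ x, gaussianPDF 0 1 x * ∫⁻ y in s, gaussianPDF x 1 y
      = ∫⁻ y in s, ∫⁻ x, gaussianPDF 0 1 x * gaussianPDF x 1 y := by
    have h1 : ∀ x, gaussianPDF 0 1 x * ∫⁻ y in s, gaussianPDF x 1 y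
        = ∫⁻ y in s, gaussianPDF 0 1 x * gaussianPDF x 1 y := fun x =>
      (lintegral_const_mul _ (gpdf_measurable2.comp measurable_prodMk_left)).symm
    simp_rw [h1]
    exact lintegral_lintegral_swap
      (((measurable_gaussianPDF 0 1).comp measurable_fst).mul gpdf_measurable2).aemeasurable
  rw [hswap]
  simp_rw [lint_conv]
  rw [gaussianReal_apply 0 (by norm_num) s]

/-! ### The standard gaussian CDF and quantile -/

noncomputable def Fg (x : ℝ) : ℝ := ((gaussianReal 0 1) (Iic x)).toReal

local notation "μ1" => gaussianReal 0 1

lemma gauss_neg_map : Measure.map (fun x : ℝ => -x) μ1 = μ1 := by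
  have h : (fun x : ℝ => -x) = fun x : ℝ => (-1) * x := by funext x; ring
  rw [h, gaussianReal_map_const_mul]
  congr 1
  · ring
  · ext
    norm_num

lemma Fg_zero : Fg 0 = 1/2 := by
  have hne : ∀ x : ℝ, μ1 (Iic x) ≠ ⊤ := fun x => measure_ne_top _ _
  have hatom : μ1 {(0:ℝ)} = 0 :=
    gaussianReal_absolutelyContinuous 0 one_ne_zero (measure_singleton 0)
  have hsym : μ1 (Ici (0:ℝ)) = μ1 (Iic 0) := by
    conv_lhs => rw [← gauss_neg_map]
    rw [Measure.map_apply measurable_neg measurableSet_Ici]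
    congr 1
    ext x
    simp
  have hIio : μ1 (Iio (0:ℝ)) = μ1 (Iic 0) := by
    rw [← Iic_diff_right, measure_diff_null hatom]
  have hcompl : μ1 (Iio (0:ℝ)) + μ1 (Ici 0) = 1 := by
    rw [← measure_union (Iio_disjoint_Ici le_rfl) measurableSet_Ici, Iio_union_Ici,
      measure_univ]
  rw [hIio, hsym] at hcompl
  have h2 := congrArg ENNReal.toReal hcompl
  rw [ENNReal.toReal_add (hne 0) (hne 0), ENNReal.toReal_one] at h2
  unfold Fg
  linarith

lemma Fg_mono : Monotone Fg := fun _ _ hxy =>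
  ENNReal.toReal_le_toReal (measure_ne_top _ _) (measure_ne_top _ _) |>.2
    (measure_mono (Iic_subset_Iic.2 hxy))

lemma Fg_split {x : ℝ} (hx : x ≤ 0) : Fg 0 = Fg x + (μ1 (Ioc x 0)).toReal := by
  unfold Fg
  rw [← ENNReal.toReal_add (measure_ne_top _ _) (measure_ne_top _ _),
    ← measure_union (Iic_disjoint_Ioc le_rfl) measurableSet_Ioc, Iic_union_Ioc_eq_Iic hx]

lemma gpdf_le_one (t : ℝ) : gaussianPDFReal 0 1 t ≤ 1 := by
  rw [gaussianPDFReal]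
  simp only [NNReal.coe_one, mul_one]
  have h1 : (1:ℝ) ≤ Real.sqrt (2 * π) := by
    rw [show (1:ℝ) = Real.sqrt 1 by simp]
    exact Real.sqrt_le_sqrt (by nlinarith [pi_gt_three])
  calc (√(2 * π))⁻¹ * rexp (-(t - 0) ^ 2 / 2)
      ≤ 1 * 1 := by
        apply mul_le_mul (inv_le_one_of_one_le₀ h1) _ (Real.exp_nonneg _) zero_le_one
        rw [Real.exp_le_one_iff]
        nlinarith [sq_nonneg (t - 0)]
    _ = 1 := by norm_num

lemma Ioc_bound {x : ℝ} (hx : x ≤ 0) : (μ1 (Ioc x 0)).toReal ≤ -x := by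
  have h : μ1 (Ioc x 0) = ENNReal.ofReal (∫ t in Ioc x 0, gaussianPDFReal 0 1 t) :=
    gaussianReal_apply_eq_integral 0 one_ne_zero _
  rw [h, ENNReal.toReal_ofReal (by
    apply MeasureTheory.integral_nonneg; intro t; exact gaussianPDFReal_nonneg _ _ _)]
  calc (∫ t in Ioc x 0, gaussianPDFReal 0 1 t)
      ≤ ∫ _t in Ioc x 0, (1:ℝ) := by
        apply setIntegral_mono_on (integrable_gaussianPDFReal 0 1).integrableOn
          ((integrableOn_const_iff (μ := volume)).2
            (Or.inr (by rw [Real.volume_Ioc]; exact ENNReal.ofReal_lt_top)))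
          measurableSet_Ioc (fun t _ => gpdf_le_one t)
    _ = -x := by
        rw [setIntegral_const, measureReal_def, Real.volume_Ioc, smul_eq_mul, mul_one,
          ENNReal.toReal_ofReal (by linarith)]
        ring

lemma Fg_lower {x : ℝ} (hx : x ≤ 0) : 1/2 + x ≤ Fg x := by
  have h := Fg_split hx
  rw [Fg_zero] at h
  have := Ioc_bound hx
  linarith

lemma exists_small {u : ℝ} (hu : 0 < u) : ∃ x₀ : ℝ, Fg x₀ < u := by
  have ht := tendsto_measure_Ioc_atBot μ1 (0:ℝ)
  have ht2 : Filter.Tendsto (fun x => (μ1 (Ioc x 0)).toReal) Filter.atBot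
      (nhds ((μ1 (Iic 0)).toReal)) :=
    (ENNReal.tendsto_toReal (measure_ne_top _ _)).comp ht
  have hev : ∀ᶠ x in Filter.atBot, (μ1 (Iic 0)).toReal - u < (μ1 (Ioc x 0)).toReal :=
    ht2.eventually_const_lt (by linarith)
  obtain ⟨x₀, hx₀, hx₀'⟩ := (hev.and (Filter.eventually_le_atBot (0:ℝ))).exists
  refine ⟨x₀, ?_⟩
  have h := Fg_split hx₀'
  have hF0 : Fg 0 = (μ1 (Iic 0)).toReal := rfl
  rw [hF0] at h
  unfold Fg at h ⊢
  linarith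

lemma mem_S {u : ℝ} (hu : u ≤ 1/2) : (0:ℝ) ∈ {x : ℝ | u ≤ Fg x} := by
  simpa [Fg_zero] using hu

lemma bddBelow_S {u : ℝ} (hu : 0 < u) : BddBelow {x : ℝ | u ≤ Fg x} := by
  obtain ⟨x₀, hx₀⟩ := exists_small hu
  refine ⟨x₀, fun y hy => ?_⟩
  by_contra hc
  push_neg at hc
  simp only [mem_setOf_eq] at hy
  have := Fg_mono hc.le
  linarith

lemma S_eq (u : ℝ) : {x : ℝ | u ≤ (μ1 (Iic x)).toReal} = {x : ℝ | u ≤ Fg x} := rfl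

lemma mQuantile_neg {u : ℝ} (hu : 0 < u) (hu2 : u < 1/2) : mQuantile μ1 u < 0 := by
  have hx : (u - 1/2 : ℝ) ∈ {x : ℝ | u ≤ Fg x} := by
    have := Fg_lower (x := u - 1/2) (by linarith)
    simp only [mem_setOf_eq]
    linarith
  unfold mQuantile
  rw [S_eq]
  calc sInf {x : ℝ | u ≤ Fg x} ≤ u - 1/2 := csInf_le (bddBelow_S hu) hx
    _ < 0 := by linarith

lemma mQuantile_mono : MonotoneOn (mQuantile μ1) (Icc (1/4 : ℝ) (3/8)) := by
  intro u hu v hv huv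
  unfold mQuantile
  rw [S_eq, S_eq]
  apply csInf_le_csInf (bddBelow_S (by linarith [hu.1])) ⟨0, mem_S (by linarith [hv.2])⟩
  intro x hx
  exact le_trans huv hx

/-! ### Scaling -/

lemma mQuantile_map_mul (μ : Measure ℝ) {c : ℝ} (hc : 0 < c) (u : ℝ) :
    mQuantile (Measure.map (fun x => c * x) μ) u = c * mQuantile μ u := by
  unfold mQuantile
  have hset : {x : ℝ | u ≤ ((Measure.map (fun x => c * x) μ) (Iic x)).toReal}
      = c • {x : ℝ | u ≤ (μ (Iic x)).toReal} := by
    ext x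
    rw [Set.mem_smul_set_iff_inv_smul_mem₀ hc.ne']
    simp only [mem_setOf_eq, smul_eq_mul]
    rw [Measure.map_apply (measurable_const_mul c) measurableSet_Iic]
    have hpre : (fun x : ℝ => c * x) ⁻¹' Iic x = Iic (c⁻¹ * x) := by
      ext t
      simp only [mem_preimage, mem_Iic]
      rw [mul_comm c⁻¹ x, ← le_div_iff₀' hc, div_eq_mul_inv, mul_comm x c⁻¹]
    rw [hpre]
  rw [hset, Real.sInf_smul_of_nonneg hc.le, smul_eq_mul]

lemma sqrt2_map :
    Measure.map (fun x => Real.sqrt 2 * x) (gaussianReal 0 1) = gaussianReal 0 2 := by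
  rw [gaussianReal_map_const_mul]
  congr 1
  · ring
  · ext
    simp [Real.sq_sqrt]

lemma mQuantile_two (u : ℝ) :
    mQuantile (gaussianReal 0 2) u = Real.sqrt 2 * mQuantile (gaussianReal 0 1) u := by
  rw [← sqrt2_map, mQuantile_map_mul _ (Real.sqrt_pos.2 two_pos)]

/-! ### The winsorized mean computations -/

lemma winsorized_neg : winsorizedMean (gaussianReal 0 1) (1/4) (5/8) < 0 := by
  have h38 : (1:ℝ) - 5/8 = 3/8 := by norm_num
  have hmono := mQuantile_mono
  have hint : IntervalIntegrable (mQuantile μ1) volume (1/4) (3/8) := by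
    apply MonotoneOn.intervalIntegrable
    rw [uIcc_of_le (by norm_num)]
    exact hmono
  have hfa : mQuantile μ1 (3/8) < 0 := mQuantile_neg (by norm_num) (by norm_num)
  have hfp : mQuantile μ1 (1/4) < 0 := mQuantile_neg (by norm_num) (by norm_num)
  have hIle : (∫ u in (1/4 : ℝ)..(3/8), mQuantile μ1 u) ≤ (3/8 - 1/4) * mQuantile μ1 (3/8) := by
    have h := intervalIntegral.integral_mono_on (by norm_num : (1/4:ℝ) ≤ 3/8) hint
      intervalIntegrable_const
      (fun x hx => hmono hx (right_mem_Icc.2 (by norm_num)) hx.2)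
    rwa [intervalIntegral.integral_const, smul_eq_mul] at h
  unfold winsorizedMean
  rw [h38]
  nlinarith

lemma winsorized_scale :
    winsorizedMean (gaussianReal 0 2) (1/4) (5/8)
      = Real.sqrt 2 * winsorizedMean (gaussianReal 0 1) (1/4) (5/8) := by
  unfold winsorizedMean
  simp_rw [mQuantile_two]
  rw [intervalIntegral.integral_const_mul]
  ring

end WinsorAux

end Aux

/-- Failure of subadditivity of the winsorized mean: there exist independent
standard normal random variables `X`, `Y` and winsorizing proportions
`0 < p < 1 − q < 1/2` with `ρ(X+Y) > ρ(X) + ρ(Y)`. -/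
theorem winsorizedMean_not_subadditive :
    ∃ (Ω : Type) (_ : MeasureSpace Ω) (_ : IsProbabilityMeasure (ℙ : Measure Ω))
      (X Y : Ω → ℝ) (p q : ℝ),
      IndepFun X Y ℙ ∧
      Measure.map X ℙ = gaussianReal 0 1 ∧
      Measure.map Y ℙ = gaussianReal 0 1 ∧
      0 < p ∧ p < 1 - q ∧ 1 - q < 1/2 ∧
      winsorizedMean (Measure.map (X + Y) ℙ) p q >
        winsorizedMean (Measure.map X ℙ) p q + winsorizedMean (Measure.map Y ℙ) p q := by
  classical
  letI : MeasureSpace (ℝ × ℝ) := ⟨(gaussianReal 0 1).prod (gaussianReal 0 1)⟩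
  have hP : (ℙ : Measure (ℝ × ℝ)) = (gaussianReal 0 1).prod (gaussianReal 0 1) := rfl
  have hprob : IsProbabilityMeasure (ℙ : Measure (ℝ × ℝ)) := by
    rw [hP]; infer_instance
  have hX : Measure.map (Prod.fst : ℝ × ℝ → ℝ) ℙ = gaussianReal 0 1 := by
    rw [hP, show Measure.map (Prod.fst : ℝ × ℝ → ℝ) ((gaussianReal 0 1).prod (gaussianReal 0 1))
      = Measure.fst ((gaussianReal 0 1).prod (gaussianReal 0 1)) from rfl, Measure.fst_prod]
  have hY : Measure.map (Prod.snd : ℝ × ℝ → ℝ) ℙ = gaussianReal 0 1 := by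
    rw [hP, show Measure.map (Prod.snd : ℝ × ℝ → ℝ) ((gaussianReal 0 1).prod (gaussianReal 0 1))
      = Measure.snd ((gaussianReal 0 1).prod (gaussianReal 0 1)) from rfl, Measure.snd_prod]
  have hsum : Measure.map ((Prod.fst : ℝ × ℝ → ℝ) + Prod.snd) ℙ = gaussianReal 0 2 := by
    rw [hP, show (Prod.fst : ℝ × ℝ → ℝ) + Prod.snd = fun p : ℝ × ℝ => p.1 + p.2 from rfl]
    exact WinsorAux.gauss_sum_map
  have hindep : IndepFun (Prod.fst : ℝ × ℝ → ℝ) (Prod.snd : ℝ × ℝ → ℝ) ℙ := by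
    rw [indepFun_iff_map_prod_eq_prod_map_map measurable_fst.aemeasurable
      measurable_snd.aemeasurable]
    rw [show (fun ω : ℝ × ℝ => (ω.1, ω.2)) = id from rfl, Measure.map_id, hX, hY, hP]
  refine ⟨ℝ × ℝ, inferInstance, hprob, Prod.fst, Prod.snd, 1/4, 5/8, hindep, hX, hY,
    by norm_num, by norm_num, by norm_num, ?_⟩
  rw [hsum, hX, hY, WinsorAux.winsorized_scale]
  have hneg := WinsorAux.winsorized_neg
  have h2 : Real.sqrt 2 < 2 := by
    nlinarith [Real.sq_sqrt (by norm_num : (0:ℝ) ≤ 2), Real.sqrt_nonneg 2]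
  nlinarith
end

section
/- For an exponential random variable with quantile function F⁻¹(w) = −θ·log(1−w), the winsorized second moment equals θ²·{[log(1−p)]² + 2(1−p)[1 − log(1−p)] − 2q(1 − log q)}, i.e., p·[F⁻¹(p)]² + ∫_p^{1−q} [F⁻¹(w)]² dw + q·[F⁻¹(1−q)]² equals that expression. -/
open MeasureTheory intervalIntegral Real

/-- The winsorized second moment of an exponential distribution with mean `θ`
(quantile function `F⁻¹(w) = −θ·log(1−w)`) equals
`θ²·{[log(1−p)]² + 2(1−p)[1 − log(1−p)] − 2q(1 − log q)}`. -/
theorem exponential_winsorized_second_moment (θ p q : ℝ) (hθ : 0 < θ)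
    (hp : 0 < p) (hpq : p < 1 - q) (hq : 1 - q < 1) :
    p * (-θ * Real.log (1 - p))^2 +
      (∫ w in p..(1 - q), (-θ * Real.log (1 - w))^2) +
      q * (-θ * Real.log (1 - (1 - q)))^2 =
    θ^2 * ((Real.log (1 - p))^2 + 2*(1 - p)*(1 - Real.log (1 - p))
            - 2*q*(1 - Real.log q)) := by
  have hq0 : 0 < q := by linarith
  have hple : p ≤ 1 - q := le_of_lt hpq
  have hpos : ∀ w ∈ Set.uIcc p (1 - q), 0 < 1 - w := by
    intro w hw
    rw [Set.uIcc_of_le hple] at hw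
    have := hw.2
    linarith
  have key : ∀ w ∈ Set.uIcc p (1 - q),
      HasDerivAt (fun w => -(1 - w) * ((Real.log (1 - w))^2 - 2 * Real.log (1 - w) + 2))
        ((Real.log (1 - w))^2) w := by
    intro w hw
    have hw1 : 0 < 1 - w := hpos w hw
    have h1 : HasDerivAt (fun w : ℝ => 1 - w) (-1) w := by
      simpa using (hasDerivAt_id w).const_sub 1
    have hlog : HasDerivAt (fun w => Real.log (1 - w)) ((1 - w)⁻¹ * -1) w :=
      (Real.hasDerivAt_log (ne_of_gt hw1)).comp w h1
    have hmain := h1.neg.mul (((hlog.pow 2).sub (hlog.const_mul 2)).add_const 2)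
    refine hmain.congr_deriv ?_
    simp only [Pi.pow_apply, Pi.sub_apply, Pi.neg_apply, Nat.cast_ofNat]
    field_simp
    ring
  have hcont : ContinuousOn (fun w => (Real.log (1 - w))^2) (Set.uIcc p (1 - q)) := by
    apply ContinuousOn.pow
    apply ContinuousOn.log ((continuous_const.sub continuous_id).continuousOn)
    intro x hx
    exact ne_of_gt (hpos x hx)
  have hftc := intervalIntegral.integral_eq_sub_of_hasDerivAt key
    (hcont.intervalIntegrable)
  have hint : (∫ w in p..(1 - q), (-θ * Real.log (1 - w))^2)
      = θ^2 * ∫ w in p..(1 - q), (Real.log (1 - w))^2 := by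
    rw [← intervalIntegral.integral_const_mul]
    congr 1
    ext w
    ring
  rw [hint, hftc]
  have h1q : 1 - (1 - q) = q := by ring
  rw [h1q]
  ring
end
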